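/- arXiv:2101.12324 — 3 statements merged into one kernel-verified Lean document; each statement's English description precedes it below -/
import Mathlib

section
/- Let f be a proper convex function on ℝ^d and ξ a point in the relative interior of the effective domain of f. If the subdifferential ∂f(ξ) is contained in a hyperplane {h ∈ ℝ^d : h·ξ = b} for some b ∈ ℝ, then the one-variable function t ↦ f(tξ) is differentiable at t = 1 (with derivative b). -/
open Set Pointwise

namespace Stmt4Aux

variable {E : Type*} [AddCommGroup E] [Module ℝ E]

/-- Monotonicity of difference quotients of a convex function. -/
lemma slope_mono (f : E → ℝ) (s : Set E) (hconv : ConvexOn ℝ s f) (ξ v : E) (hξs : ξ ∈ s)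
    {t t' : ℝ} (ht : 0 < t) (htt' : t ≤ t') (h' : ξ + t' • v ∈ s) :
    ξ + t • v ∈ s ∧ (f (ξ + t • v) - f ξ) / t ≤ (f (ξ + t' • v) - f ξ) / t' := by
  have ht' : 0 < t' := lt_of_lt_of_le ht htt'
  have hb : (0:ℝ) ≤ t / t' := le_of_lt (div_pos ht ht')
  have hb1 : t / t' ≤ 1 := (div_le_one ht').mpr htt'
  have ha : (0:ℝ) ≤ 1 - t / t' := by linarith
  have hab : (1 - t/t') + t/t' = 1 := by ring
  have h1 : t / t' * t' = t := div_mul_cancel₀ t ht'.ne'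
  have hmem : (1 - t/t') • ξ + (t/t') • (ξ + t' • v) = ξ + t • v := by
    have : (1 - t/t') • ξ + (t/t') • (ξ + t' • v) = ξ + (t/t' * t') • v := by module
    rw [this, h1]
  constructor
  · have := hconv.1 hξs h' ha hb hab
    rwa [hmem] at this
  · have hineq := hconv.2 hξs h' ha hb hab
    rw [hmem, smul_eq_mul, smul_eq_mul] at hineq
    have h2' := mul_le_mul_of_nonneg_right hineq ht'.le
    have e1 : t/t' * t' * f (ξ + t' • v) = t * f (ξ + t' • v) := by rw [h1]
    have e2 : t/t' * t' * f ξ = t * f ξ := by rw [h1]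
    rw [div_le_div_iff₀ ht ht']
    nlinarith [h2', e1, e2]

/-- Three-point slope inequality: left slope ≤ right slope. -/
lemma three_slope (f : E → ℝ) (s : Set E) (hconv : ConvexOn ℝ s f) (ξ v : E)
    {t t' : ℝ} (ht : 0 < t) (ht' : 0 < t')
    (h1 : ξ + t • v ∈ s) (h2 : ξ - t' • v ∈ s) :
    (f ξ - f (ξ - t' • v)) / t' ≤ (f (ξ + t • v) - f ξ) / t := by
  have hsum : (0:ℝ) < t + t' := by linarith
  have ha : (0:ℝ) ≤ t / (t + t') := le_of_lt (div_pos ht hsum)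
  have hb : (0:ℝ) ≤ t' / (t + t') := le_of_lt (div_pos ht' hsum)
  have hab : t / (t + t') + t' / (t + t') = 1 := by field_simp
  have e1 : t / (t + t') * (t + t') = t := div_mul_cancel₀ t hsum.ne'
  have e2 : t' / (t + t') * (t + t') = t' := div_mul_cancel₀ t' hsum.ne'
  have hmem : (t / (t + t')) • (ξ - t' • v) + (t' / (t + t')) • (ξ + t • v) = ξ := by
    have h0 : (t / (t + t')) • (ξ - t' • v) + (t' / (t + t')) • (ξ + t • v)
        = (t / (t+t') + t' / (t+t')) • ξ + (t' / (t+t') * t - t / (t+t') * t') • v := by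
      module
    rw [h0, hab]
    have : t' / (t+t') * t - t / (t+t') * t' = 0 := by field_simp; ring
    rw [this, one_smul, zero_smul, add_zero]
  have hineq := hconv.2 h2 h1 ha hb hab
  rw [hmem, smul_eq_mul, smul_eq_mul] at hineq
  have h2' := mul_le_mul_of_nonneg_right hineq hsum.le
  have e1' : t / (t + t') * (t + t') * f (ξ - t' • v) = t * f (ξ - t' • v) := by rw [e1]
  have e2' : t' / (t + t') * (t + t') * f (ξ + t • v) = t' * f (ξ + t • v) := by rw [e2]
  rw [div_le_div_iff₀ ht' ht]
  nlinarith [h2', e1', e2']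

lemma midpoint_slope (f : E → ℝ) (s : Set E) (hconv : ConvexOn ℝ s f) (ξ v w : E)
    {t : ℝ} (ht : 0 < t) (hv : ξ + (2*t) • v ∈ s) (hw : ξ + (2*t) • w ∈ s) :
    ξ + t • (v + w) ∈ s ∧
    (f (ξ + t • (v + w)) - f ξ) / t ≤
      (f (ξ + (2*t) • v) - f ξ) / (2*t) + (f (ξ + (2*t) • w) - f ξ) / (2*t) := by
  have hmem : (1/2 : ℝ) • (ξ + (2*t) • v) + (1/2 : ℝ) • (ξ + (2*t) • w) = ξ + t • (v + w) := by
    module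
  have hab : (1/2 : ℝ) + 1/2 = 1 := by norm_num
  constructor
  · have := hconv.1 hv hw (by norm_num) (by norm_num) hab
    rwa [hmem] at this
  · have hineq := hconv.2 hv hw (by norm_num : (0:ℝ) ≤ 1/2) (by norm_num : (0:ℝ) ≤ 1/2) hab
    rw [hmem, smul_eq_mul, smul_eq_mul] at hineq
    rw [← add_div, div_le_div_iff₀ ht (by positivity)]
    nlinarith [hineq]

lemma nbhd_of_intrinsicInterior {d : ℕ} {s : Set (Fin d → ℝ)} {ξ : Fin d → ℝ}
    (hξ : ξ ∈ intrinsicInterior ℝ s) {v : Fin d → ℝ}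
    (hv : v ∈ (affineSpan ℝ s).direction) :
    ∃ δ : ℝ, 0 < δ ∧ ∀ t : ℝ, |t| < δ → ξ + t • v ∈ s := by
  have hξs : ξ ∈ s := intrinsicInterior_subset hξ
  have hξA : ξ ∈ affineSpan ℝ s := subset_affineSpan ℝ s hξs
  have hmemA : ∀ t : ℝ, ξ + t • v ∈ affineSpan ℝ s := by
    intro t
    have := AffineSubspace.vadd_mem_of_mem_direction
      ((affineSpan ℝ s).direction.smul_mem t hv) hξA
    simpa [vadd_eq_add, add_comm] using this
  obtain ⟨y, hy, hyx⟩ := mem_intrinsicInterior.mp hξ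
  set φ : ℝ → (affineSpan ℝ s) := fun t => ⟨ξ + t • v, hmemA t⟩ with hφdef
  have hφc : Continuous φ := Continuous.subtype_mk (by fun_prop) _
  have h0 : φ 0 ∈ interior ((Subtype.val) ⁻¹' s) := by
    have : φ 0 = y := Subtype.ext (by simp [φ, hyx])
    rw [this]; exact hy
  obtain ⟨δ, hδ, hball⟩ := Metric.isOpen_iff.mp (isOpen_interior.preimage hφc) 0 h0
  refine ⟨δ, hδ, fun t ht => ?_⟩
  have : φ t ∈ (Subtype.val) ⁻¹' s :=
    interior_subset (hball (by simpa [Real.dist_eq] using ht))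
  exact this

lemma exists_subgradient_vector {d : ℕ} (V : Submodule ℝ (Fin d → ℝ)) (p : (Fin d → ℝ) → ℝ)
    (hom : ∀ c : ℝ, 0 < c → ∀ v ∈ V, p (c • v) = c * p v)
    (padd : ∀ v ∈ V, ∀ w ∈ V, p (v + w) ≤ p v + p w)
    (ξ : Fin d → ℝ) (hξV : ξ ∈ V) (c : ℝ) (hc0 : ξ = 0 → c = 0)
    (hcu : c ≤ p ξ) (hcl : -p (-ξ) ≤ c) (hp0 : p 0 = 0) :
    ∃ h : Fin d → ℝ, (∀ z ∈ V, ∑ i, h i * z i ≤ p z) ∧ (∑ i, h i * ξ i) = c := by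
  classical
  set N : ↥V → ℝ := fun x => p x with hN
  have N_hom : ∀ c' : ℝ, 0 < c' → ∀ x : ↥V, N (c' • x) = c' * N x := by
    intro c' hc' x
    exact hom c' hc' x x.2
  have N_add : ∀ x y : ↥V, N (x + y) ≤ N x + N y := fun x y => padd x x.2 y y.2
  set ξ' : ↥V := ⟨ξ, hξV⟩ with hξ'
  have H : ∀ a : ℝ, a • ξ' = 0 → a • c = 0 := by
    intro a ha
    rcases smul_eq_zero.mp ha with h | h
    · rw [h, zero_smul]
    · have hξ0 : ξ = 0 := by simpa [ξ'] using congrArg Subtype.val h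
      rw [hc0 hξ0, smul_zero]
  set F : ↥V →ₗ.[ℝ] ℝ := LinearPMap.mkSpanSingleton' ξ' c H with hF
  have hf : ∀ x : F.domain, F x ≤ N x := by
    intro x
    obtain ⟨a, ha⟩ := Submodule.mem_span_singleton.mp x.2
    have hFx : F x = a * c := by
      have hx : x = ⟨a • ξ', by rw [ha]; exact x.2⟩ := Subtype.ext ha.symm
      rw [hx]
      exact LinearPMap.mkSpanSingleton'_apply ξ' c H a _
    have hNx : N ↑x = p (a • ξ) := by
      have : (↑x : ↥V) = a • ξ' := ha.symm
      rw [this]; rfl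
    rw [hFx, hNx]
    rcases lt_trichotomy a 0 with hlt | heq | hgt
    · have h1 : a • ξ = (-a) • (-ξ) := by simp
      have hV' : -ξ ∈ V := V.neg_mem hξV
      have h2 : p (a • ξ) = (-a) * p (-ξ) := by rw [h1]; exact hom (-a) (by linarith) _ hV'
      rw [h2]
      nlinarith [mul_le_mul_of_nonneg_left hcl (by linarith : (0:ℝ) ≤ -a)]
    · simp [heq, hp0]
    · rw [hom a hgt ξ hξV]
      exact mul_le_mul_of_nonneg_left hcu hgt.le
  obtain ⟨L, hL1, hL2⟩ := exists_extension_of_le_sublinear F N N_hom N_add hf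
  have hLξ : L ξ' = c := by
    have h1 := hL1 ⟨ξ', Submodule.mem_span_singleton_self ξ'⟩
    have h2 : F ⟨ξ', Submodule.mem_span_singleton_self ξ'⟩ = c :=
      LinearPMap.mkSpanSingleton'_apply_self ξ' c H _
    rw [h2] at h1
    exact h1
  obtain ⟨W, hW⟩ := Submodule.exists_isCompl V
  set pr := V.linearProjOfIsCompl W hW with hpr
  set Lf : (Fin d → ℝ) →ₗ[ℝ] ℝ := L.comp pr with hLf
  have hLfV : ∀ (z : Fin d → ℝ) (hz : z ∈ V), Lf z = L ⟨z, hz⟩ := by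
    intro z hz
    have h3 : pr z = ⟨z, hz⟩ := Submodule.linearProjOfIsCompl_apply_left hW ⟨z, hz⟩
    simp [Lf, LinearMap.comp_apply, h3]
  set e : Fin d → (Fin d → ℝ) := fun i => Pi.single i 1 with he
  have hsum : ∀ z : Fin d → ℝ, ∑ i, Lf (e i) * z i = Lf z := by
    intro z
    have hz : (∑ i, z i • e i) = z := by
      ext j
      simp [he, Pi.single_apply]
    calc ∑ i, Lf (e i) * z i = ∑ i, Lf (z i • e i) := by
          simp [Lf.map_smul, smul_eq_mul, mul_comm]
      _ = Lf (∑ i, z i • e i) := (map_sum Lf _ _).symm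
      _ = Lf z := by rw [hz]
  refine ⟨fun i => Lf (e i), ?_, ?_⟩
  · intro z hz
    rw [hsum z, hLfV z hz]
    exact hL2 ⟨z, hz⟩
  · rw [hsum ξ, hLfV ξ hξV]
    exact hLξ

end Stmt4Aux

open Stmt4Aux in
/-- If `f` is convex on `s ⊆ ℝ^d`, `ξ` lies in the relative (intrinsic) interior of `s`,
and the subdifferential `∂f(ξ) = {h : ∀ ζ ∈ s, f ξ + h·(ζ−ξ) ≤ f ζ}` is contained in
the hyperplane `{h : h·ξ = b}`, then `t ↦ f(tξ)` is differentiable at `t = 1`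
(within the set of `t` with `tξ ∈ s`), with derivative `b`. -/
theorem stmt4 (d : ℕ) (f : (Fin d → ℝ) → ℝ) (s : Set (Fin d → ℝ))
    (hconv : ConvexOn ℝ s f) (ξ : Fin d → ℝ) (hξ : ξ ∈ intrinsicInterior ℝ s) (b : ℝ)
    (hsub : ∀ h : Fin d → ℝ,
      (∀ ζ ∈ s, f ξ + (∑ i, h i * (ζ i - ξ i)) ≤ f ζ) → (∑ i, h i * ξ i) = b) :
    HasDerivWithinAt (fun t : ℝ => f (t • ξ)) b {t : ℝ | t • ξ ∈ s} 1 := by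
  classical
  have hξs : ξ ∈ s := intrinsicInterior_subset hξ
  set V : Submodule ℝ (Fin d → ℝ) := (affineSpan ℝ s).direction with hV
  rw [hasDerivWithinAt_iff_tendsto_slope]
  by_cases hξV : ξ ∈ V
  swap
  · -- the set {t | t • ξ ∈ s} is contained in {1}
    have hT : {t : ℝ | t • ξ ∈ s} \ {1} = ∅ := by
      rw [Set.diff_eq_empty]
      intro t ht
      simp only [Set.mem_setOf_eq] at ht
      by_contra hne
      simp only [Set.mem_singleton_iff] at hne
      exfalso
      apply hξV
      have h1 : t • ξ - ξ ∈ V := by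
        have := AffineSubspace.vsub_mem_direction
          (subset_affineSpan ℝ s ht) (subset_affineSpan ℝ s hξs)
        simpa [vsub_eq_sub] using this
      have h2 : t • ξ - ξ = (t - 1) • ξ := by rw [sub_smul, one_smul]
      have h3 : ξ = (t - 1)⁻¹ • ((t - 1) • ξ) := by
        rw [smul_smul, inv_mul_cancel₀ (sub_ne_zero.mpr hne), one_smul]
      rw [h3]
      exact V.smul_mem _ (h2 ▸ h1)
    rw [hT, nhdsWithin_empty]
    exact Filter.tendsto_bot
  -- main case : ξ ∈ V
  set Q : (Fin d → ℝ) → Set ℝ :=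
    fun v => {r : ℝ | ∃ t : ℝ, 0 < t ∧ ξ + t • v ∈ s ∧ r = (f (ξ + t • v) - f ξ) / t} with hQdef
  set p : (Fin d → ℝ) → ℝ := fun v => sInf (Q v) with hpdef
  have hQmem : ∀ (v : Fin d → ℝ) (t : ℝ), 0 < t → ξ + t • v ∈ s →
      (f (ξ + t • v) - f ξ) / t ∈ Q v := fun v t ht hts => ⟨t, ht, hts, rfl⟩
  have hQne : ∀ v ∈ V, (Q v).Nonempty := by
    intro v hv
    obtain ⟨δ, hδ, hs'⟩ := nbhd_of_intrinsicInterior hξ hv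
    have h1 : ξ + (δ/2) • v ∈ s := hs' (δ/2) (by rw [abs_of_pos (by positivity)]; linarith)
    exact ⟨_, hQmem v (δ/2) (by positivity) h1⟩
  have hlb' : ∀ (v : Fin d → ℝ) (t' : ℝ), 0 < t' → ξ - t' • v ∈ s →
      ∀ r ∈ Q v, (f ξ - f (ξ - t' • v)) / t' ≤ r := by
    rintro v t' ht' hmem r ⟨t, ht, hts, rfl⟩
    exact three_slope f s hconv ξ v ht ht' hts hmem
  have hbdd : ∀ v ∈ V, BddBelow (Q v) := by
    intro v hv
    obtain ⟨δ, hδ, hs'⟩ := nbhd_of_intrinsicInterior hξ hv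
    have hm : ξ - (δ/2) • v ∈ s := by
      have := hs' (-(δ/2)) (by rw [abs_neg, abs_of_pos (by positivity)]; linarith)
      simpa [neg_smul, sub_eq_add_neg] using this
    exact ⟨_, fun r hr => hlb' v (δ/2) (by positivity) hm r hr⟩
  have hple : ∀ v ∈ V, ∀ r ∈ Q v, p v ≤ r := fun v hv r hr => csInf_le (hbdd v hv) hr
  have hQneg : ∀ (v : Fin d → ℝ), ∀ r ∈ Q v, ∀ r' ∈ Q (-v), -r' ≤ r := by
    rintro v r ⟨t, ht, hts, rfl⟩ r' ⟨t', ht', hts', rfl⟩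
    have hmem : ξ + t' • (-v) = ξ - t' • v := by rw [smul_neg, sub_eq_add_neg]
    have hts'' : ξ - t' • v ∈ s := by rwa [hmem] at hts'
    have h3 := three_slope f s hconv ξ v ht ht' hts hts''
    rw [hmem]
    have he : -((f (ξ - t' • v) - f ξ) / t') = (f ξ - f (ξ - t' • v)) / t' := by ring
    rw [he]
    exact h3
  have hlow : ∀ v ∈ V, ∀ r ∈ Q v, -p (-v) ≤ r := by
    intro v hv r hr
    have h1 : -r ≤ p (-v) := le_csInf (hQne (-v) (V.neg_mem hv)) (fun r' hr' => by
      have := hQneg v r hr r' hr'; linarith)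
    linarith
  have hp0 : p 0 = 0 := by
    have hQ0 : Q 0 = {(0:ℝ)} := by
      ext r
      constructor
      · rintro ⟨t, ht, _, rfl⟩
        simp
      · rintro rfl
        exact ⟨1, one_pos, by simpa using hξs, by simp⟩
    show sInf (Q 0) = 0
    rw [hQ0]
    exact csInf_singleton 0
  have hphom : ∀ c : ℝ, 0 < c → ∀ v ∈ V, p (c • v) = c * p v := by
    intro c hc v hv
    have himg : Q (c • v) = c • Q v := by
      ext r
      constructor
      · rintro ⟨t, ht, hts, rfl⟩
        refine ⟨(f (ξ + (t*c) • v) - f ξ) / (t*c), ?_, ?_⟩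
        · exact hQmem v (t*c) (by positivity) (by rwa [smul_smul] at hts)
        · show c • ((f (ξ + (t*c) • v) - f ξ) / (t*c)) = (f (ξ + t • c • v) - f ξ) / t
          rw [smul_smul, smul_eq_mul]
          field_simp
      · rintro ⟨r', ⟨t, ht, hts, rfl⟩, rfl⟩
        have h1 : (t/c) • (c • v) = t • v := by
          rw [smul_smul, div_mul_cancel₀ t hc.ne']
        refine ⟨t/c, by positivity, ?_, ?_⟩
        · rwa [h1]
        · show c • ((f (ξ + t • v) - f ξ) / t) = (f (ξ + (t/c) • (c • v)) - f ξ) / (t/c)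
          rw [h1, smul_eq_mul]
          field_simp
    show sInf (Q (c • v)) = c * sInf (Q v)
    rw [himg, Real.sInf_smul_of_nonneg hc.le, smul_eq_mul]
  have hpadd : ∀ v ∈ V, ∀ w ∈ V, p (v + w) ≤ p v + p w := by
    intro v hv w hw
    refine le_of_forall_pos_le_add ?_
    intro ε hε
    obtain ⟨r₁, hr₁Q, hr₁⟩ := Real.lt_sInf_add_pos (hQne v hv) (half_pos hε)
    obtain ⟨r₂, hr₂Q, hr₂⟩ := Real.lt_sInf_add_pos (hQne w hw) (half_pos hε)
    obtain ⟨t₁, ht₁, ht₁s, rfl⟩ := hr₁Q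
    obtain ⟨t₂, ht₂, ht₂s, rfl⟩ := hr₂Q
    set t := min (t₁/2) (t₂/2) with htdef
    have ht : 0 < t := lt_min (by positivity) (by positivity)
    have h2t₁ : 2*t ≤ t₁ := by
      have := min_le_left (t₁/2) (t₂/2); linarith
    have h2t₂ : 2*t ≤ t₂ := by
      have := min_le_right (t₁/2) (t₂/2); linarith
    have hv2 := slope_mono f s hconv ξ v hξs (by linarith : (0:ℝ) < 2*t) h2t₁ ht₁s
    have hw2 := slope_mono f s hconv ξ w hξs (by linarith : (0:ℝ) < 2*t) h2t₂ ht₂s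
    have hmid := midpoint_slope f s hconv ξ v w ht hv2.1 hw2.1
    have hmem : (f (ξ + t • (v + w)) - f ξ) / t ∈ Q (v + w) := hQmem _ t ht hmid.1
    have h5 := hple (v + w) (V.add_mem hv hw) _ hmem
    have h6 := hmid.2
    have h7 := hv2.2
    have h8 := hw2.2
    calc p (v + w) ≤ (f (ξ + t • (v + w)) - f ξ) / t := h5
      _ ≤ p v + p w + ε := by linarith
  have hnξV : -ξ ∈ V := V.neg_mem hξV
  have h1 : -p (-ξ) ≤ p ξ :=
    le_csInf (hQne ξ hξV) (fun r hr => by have := hlow ξ hξV r hr; linarith)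
  have hext : ∀ c : ℝ, -p (-ξ) ≤ c → c ≤ p ξ → c = b := by
    intro c hcl hcu
    have hc0 : ξ = 0 → c = 0 := by
      intro h0
      have e1 : p ξ = 0 := by rw [h0]; exact hp0
      have e2 : p (-ξ) = 0 := by rw [h0, neg_zero]; exact hp0
      rw [e1] at hcu; rw [e2] at hcl
      linarith
    obtain ⟨h, hhsub, hhξ⟩ :=
      exists_subgradient_vector V p hphom hpadd ξ hξV c hc0 hcu hcl hp0
    have hgrad : ∀ ζ ∈ s, f ξ + (∑ i, h i * (ζ i - ξ i)) ≤ f ζ := by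
      intro ζ hζ
      have hzV : ζ - ξ ∈ V := by
        have := AffineSubspace.vsub_mem_direction
          (subset_affineSpan ℝ s hζ) (subset_affineSpan ℝ s hξs)
        simpa [vsub_eq_sub] using this
      have h4 : ∑ i, h i * (ζ i - ξ i) = ∑ i, h i * ((ζ - ξ) i) := by
        simp [Pi.sub_apply]
      have h5 := hhsub (ζ - ξ) hzV
      have h6 : p (ζ - ξ) ≤ f ζ - f ξ := by
        have hm : (f (ξ + (1:ℝ) • (ζ - ξ)) - f ξ) / 1 ∈ Q (ζ - ξ) :=
          hQmem _ 1 one_pos (by simpa using hζ)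
        have := hple (ζ - ξ) hzV _ hm
        simpa using this
      rw [h4]
      linarith
    exact (hhξ.symm).trans (hsub h hgrad)
  have hbp : p ξ = b := hext (p ξ) h1 le_rfl
  have hbm : -p (-ξ) = b := hext _ le_rfl h1
  -- now the tendsto statement
  rw [Metric.tendsto_nhds]
  intro ε hε
  rw [eventually_nhdsWithin_iff, Metric.eventually_nhds_iff]
  obtain ⟨r₁, hr₁Q, hr₁⟩ := Real.lt_sInf_add_pos (hQne ξ hξV) hε
  obtain ⟨r₂, hr₂Q, hr₂⟩ := Real.lt_sInf_add_pos (hQne (-ξ) hnξV) hε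
  obtain ⟨t₁, ht₁, ht₁s, rfl⟩ := hr₁Q
  obtain ⟨t₂, ht₂, ht₂s, rfl⟩ := hr₂Q
  refine ⟨min t₁ t₂, lt_min ht₁ ht₂, ?_⟩
  intro y hy hyT
  obtain ⟨hys, hyne⟩ := hyT
  simp only [Set.mem_setOf_eq] at hys
  simp only [Set.mem_singleton_iff] at hyne
  have hydist : |y - 1| < min t₁ t₂ := by simpa [Real.dist_eq] using hy
  have hslope : slope (fun t : ℝ => f (t • ξ)) 1 y = (f (y • ξ) - f ξ) / (y - 1) := by
    rw [slope_def_field]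
    simp
  rw [Real.dist_eq, hslope]
  have hpQ1 : p ξ = sInf (Q ξ) := rfl
  have hpQ2 : p (-ξ) = sInf (Q (-ξ)) := rfl
  rcases lt_or_gt_of_ne hyne with hlt | hgt
  · -- y < 1
    set u := 1 - y with hudef
    have hu : 0 < u := by linarith
    have hut : u ≤ t₂ := by
      have h5 := lt_min_iff.mp hydist
      have h6 : u ≤ |y - 1| := by
        rw [abs_sub_comm]
        exact le_abs_self u
      linarith [h5.2]
    have heq : ξ + u • (-ξ) = y • ξ := by
      rw [hudef]
      module
    have hsm := slope_mono f s hconv ξ (-ξ) hξs hu hut ht₂s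
    have hmem : (f (ξ + u • (-ξ)) - f ξ) / u ∈ Q (-ξ) := hQmem (-ξ) u hu hsm.1
    have hlo : -p ξ ≤ (f (ξ + u • (-ξ)) - f ξ) / u := by
      have := hlow (-ξ) hnξV _ hmem
      rwa [neg_neg] at this
    have hhi := hsm.2
    have hym : y - 1 = -u := by rw [hudef]; ring
    have hval : (f (y • ξ) - f ξ) / (y - 1) = -((f (ξ + u • (-ξ)) - f ξ) / u) := by
      rw [← heq, hym, div_neg]
    rw [hval, abs_lt]
    constructor
    · linarith [hr₂]
    · linarith
  · -- y > 1
    set u := y - 1 with hudef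
    have hu : 0 < u := by linarith
    have hut : u ≤ t₁ := by
      have h5 := lt_min_iff.mp hydist
      have h6 : u ≤ |y - 1| := le_abs_self u
      linarith [h5.1]
    have heq : ξ + u • ξ = y • ξ := by
      rw [hudef]
      module
    have hsm := slope_mono f s hconv ξ ξ hξs hu hut ht₁s
    have hmem : (f (ξ + u • ξ) - f ξ) / u ∈ Q ξ := hQmem ξ u hu hsm.1
    have hlo := hlow ξ hξV _ hmem
    have hhi := hsm.2
    have hval : (f (y • ξ) - f ξ) / (y - 1) = (f (ξ + u • ξ) - f ξ) / u := by
      rw [← heq, ← hudef]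
    rw [hval, abs_lt]
    constructor
    · linarith
    · linarith [hr₁]
end

section
/- Let f be a proper convex function on ℝ^d and ξ in the relative interior of the effective domain of f. The following are equivalent: (a) ∂f(ξ) is contained in some hyperplane {h : h·ξ = b}; (b) the convex conjugate f* is constant on ∂f(ξ); (c) t ↦ f(tξ) is differentiable at t = 1. -/
open Set Filter Pointwise

namespace Stmt5Aux

variable {d : ℕ} {f : (Fin d → ℝ) → ℝ} {s : Set (Fin d → ℝ)} {ξ : Fin d → ℝ}

/-- The set of difference quotients of `f` at `ξ` in direction `v`. -/
def SS (f : (Fin d → ℝ) → ℝ) (s : Set (Fin d → ℝ)) (ξ v : Fin d → ℝ) : Set ℝ :=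
  {y | ∃ t : ℝ, 0 < t ∧ ξ + t • v ∈ s ∧ y = (f (ξ + t • v) - f ξ) / t}

/-- The (lower) directional derivative of `f` at `ξ` in direction `v`. -/
noncomputable def pp (f : (Fin d → ℝ) → ℝ) (s : Set (Fin d → ℝ)) (ξ v : Fin d → ℝ) : ℝ :=
  sInf (SS f s ξ v)

theorem oneDim (hconv : ConvexOn ℝ s f) (ξ v : Fin d → ℝ) :
    ConvexOn ℝ {t : ℝ | ξ + t • v ∈ s} (fun t : ℝ => f (ξ + t • v)) := by
  have h := hconv.comp_affineMap (AffineMap.lineMap (ξ : Fin d → ℝ) (ξ + v))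
  have he : ∀ t : ℝ, (AffineMap.lineMap (ξ : Fin d → ℝ) (ξ + v)) t = ξ + t • v := by
    intro t
    rw [AffineMap.lineMap_apply_module]
    module
  have hset : (AffineMap.lineMap (ξ : Fin d → ℝ) (ξ + v)) ⁻¹' s = {t : ℝ | ξ + t • v ∈ s} := by
    ext t; simp [he t]
  have hfun : (f ∘ (AffineMap.lineMap (ξ : Fin d → ℝ) (ξ + v))) = fun t : ℝ => f (ξ + t • v) := by
    funext t; simp [he t]
  rwa [hset, hfun] at h

theorem mem_of_le (hconv : ConvexOn ℝ s f) (hξs : ξ ∈ s) (v : Fin d → ℝ) {t₁ t₂ : ℝ}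
    (h0 : 0 ≤ t₁) (h12 : t₁ ≤ t₂) (h : ξ + t₂ • v ∈ s) : ξ + t₁ • v ∈ s := by
  have hc : Convex ℝ {t : ℝ | ξ + t • v ∈ s} := (oneDim hconv ξ v).1
  have h0' : (0 : ℝ) ∈ {t : ℝ | ξ + t • v ∈ s} := by simpa using hξs
  exact hc.ordConnected.out h0' h ⟨h0, h12⟩

theorem slope_mono (hconv : ConvexOn ℝ s f) (hξs : ξ ∈ s) (v : Fin d → ℝ) {t₁ t₂ : ℝ}
    (h0 : 0 < t₁) (h12 : t₁ ≤ t₂) (h : ξ + t₂ • v ∈ s) :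
    (f (ξ + t₁ • v) - f ξ) / t₁ ≤ (f (ξ + t₂ • v) - f ξ) / t₂ := by
  have h1 := (oneDim hconv ξ v).secant_mono (a := 0) (x := t₁) (y := t₂)
    (by simpa using hξs) (mem_of_le hconv hξs v h0.le h12 h) h (ne_of_gt h0)
    (ne_of_gt (lt_of_lt_of_le h0 h12)) h12
  simpa using h1

theorem slope_lb (hconv : ConvexOn ℝ s f) (hξs : ξ ∈ s) (v : Fin d → ℝ) {t t' : ℝ}
    (ht : 0 < t) (ht' : 0 < t') (hm : ξ + t • v ∈ s) (hm' : ξ + t' • (-v) ∈ s) :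
    -((f (ξ + t' • (-v)) - f ξ) / t') ≤ (f (ξ + t • v) - f ξ) / t := by
  have hx : ξ + (-t') • v ∈ s := by
    rwa [show (-t') • v = t' • (-v) by rw [smul_neg, neg_smul]]
  have h1 := (oneDim hconv ξ v).secant_mono (a := 0) (x := -t') (y := t)
    (by simpa using hξs) hx hm (by intro hc; exact absurd (neg_eq_zero.1 hc) (ne_of_gt ht'))
    (ne_of_gt ht) (by linarith)
  simp only [zero_smul, add_zero, sub_zero] at h1
  rw [show (-t') • v = t' • (-v) by rw [smul_neg, neg_smul], div_neg] at h1
  exact h1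

theorem pp_zero (hξs : ξ ∈ s) : pp f s ξ 0 = 0 := by
  have h : SS f s ξ 0 = {0} := by
    ext y
    simp only [SS, mem_setOf_eq, smul_zero, add_zero, sub_self, zero_div, mem_singleton_iff]
    constructor
    · rintro ⟨t, ht, -, rfl⟩; rfl
    · rintro rfl; exact ⟨1, one_pos, hξs, rfl⟩
  rw [pp, h, csInf_singleton]

theorem pp_hom (c : ℝ) (hc : 0 < c) (v : Fin d → ℝ) :
    pp f s ξ (c • v) = c * pp f s ξ v := by
  have himg : SS f s ξ (c • v) = c • SS f s ξ v := by
    ext y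
    constructor
    · rintro ⟨t, ht, hmem, rfl⟩
      rw [smul_smul] at hmem
      refine ⟨(f (ξ + (t * c) • v) - f ξ) / (t * c), ⟨t * c, by positivity, hmem, rfl⟩, ?_⟩
      simp only [smul_smul, smul_eq_mul]
      field_simp
    · rintro ⟨z, ⟨t, ht, hmem, rfl⟩, rfl⟩
      refine ⟨t / c, by positivity, ?_, ?_⟩
      · rwa [smul_smul, div_mul_cancel₀ _ (ne_of_gt hc)]
      · rw [smul_smul, div_mul_cancel₀ _ (ne_of_gt hc)]
        simp only [smul_eq_mul]
        field_simp
  rw [pp, pp, himg, Real.sInf_smul_of_nonneg hc.le, smul_eq_mul]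

theorem le_add_all {a b : ℝ} (h : ∀ ε : ℝ, 0 < ε → a ≤ b + ε) : a ≤ b := by
  by_contra h'
  push_neg at h'
  have := h ((a - b) / 2) (by linarith)
  linarith

theorem pp_add (hconv : ConvexOn ℝ s f) (hξs : ξ ∈ s) (v w : Fin d → ℝ)
    (hnv : (SS f s ξ v).Nonempty) (hnw : (SS f s ξ w).Nonempty)
    (hb : BddBelow (SS f s ξ (v + w))) :
    pp f s ξ (v + w) ≤ pp f s ξ v + pp f s ξ w := by
  refine le_add_all ?_
  intro ε hε
  obtain ⟨y₁, hy₁m, hy₁⟩ := exists_lt_of_csInf_lt hnv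
    (lt_add_of_pos_right (pp f s ξ v) (half_pos hε))
  obtain ⟨t₁, ht₁, hm₁, rfl⟩ := hy₁m
  obtain ⟨y₂, hy₂m, hy₂⟩ := exists_lt_of_csInf_lt hnw
    (lt_add_of_pos_right (pp f s ξ w) (half_pos hε))
  obtain ⟨t₂, ht₂, hm₂, rfl⟩ := hy₂m
  set t := min t₁ t₂ with htdef
  have ht : 0 < t := lt_min ht₁ ht₂
  have hmv : ξ + t • v ∈ s := mem_of_le hconv hξs v ht.le (min_le_left _ _) hm₁
  have hmw : ξ + t • w ∈ s := mem_of_le hconv hξs w ht.le (min_le_right _ _) hm₂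
  have hcvx := hconv.2 hmv hmw (by norm_num : (0:ℝ) ≤ 1/2) (by norm_num : (0:ℝ) ≤ 1/2)
    (by norm_num : (1/2 : ℝ) + 1/2 = 1)
  have hpt : (1/2 : ℝ) • (ξ + t • v) + (1/2 : ℝ) • (ξ + t • w) = ξ + (t/2) • (v + w) := by
    module
  rw [hpt] at hcvx
  have hmem : ξ + (t/2) • (v + w) ∈ s := by
    rw [← hpt]
    exact hconv.1 hmv hmw (by norm_num) (by norm_num) (by norm_num)
  have h1 : pp f s ξ (v + w) ≤ (f (ξ + (t/2) • (v + w)) - f ξ) / (t/2) :=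
    csInf_le hb ⟨t/2, by positivity, hmem, rfl⟩
  have h2 : (f (ξ + (t/2) • (v + w)) - f ξ) / (t/2)
      ≤ (f (ξ + t • v) - f ξ) / t + (f (ξ + t • w) - f ξ) / t := by
    rw [← add_div, div_le_div_iff₀ (by positivity) ht]
    simp only [smul_eq_mul] at hcvx
    nlinarith [hcvx, ht]
  have h3 : (f (ξ + t • v) - f ξ) / t ≤ (f (ξ + t₁ • v) - f ξ) / t₁ :=
    slope_mono hconv hξs v ht (min_le_left _ _) hm₁
  have h4 : (f (ξ + t • w) - f ξ) / t ≤ (f (ξ + t₂ • w) - f ξ) / t₂ :=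
    slope_mono hconv hξs w ht (min_le_right _ _) hm₂
  linarith

end Stmt5Aux

open Stmt5Aux

/-- For `f` convex on `s ⊆ ℝ^d` and `ξ` in the relative (intrinsic) interior of `s`
(with the segment condition making `t ↦ f(tξ)` defined near `t = 1`), the following
are equivalent: (a) `∂f(ξ)` lies in a hyperplane `{h : h·ξ = b}`; (b) the convex
conjugate `f*` is constant on `∂f(ξ)`; (c) `t ↦ f(tξ)` is differentiable at `t = 1`. -/
theorem stmt5 (d : ℕ) (f : (Fin d → ℝ) → ℝ) (s : Set (Fin d → ℝ))
    (hconv : ConvexOn ℝ s f) (ξ : Fin d → ℝ) (hξ : ξ ∈ intrinsicInterior ℝ s)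
    (hseg : {t : ℝ | t • ξ ∈ s} ∈ nhds (1 : ℝ)) :
    ((∃ b : ℝ, ∀ h : Fin d → ℝ,
        (∀ ζ ∈ s, f ξ + (∑ i, h i * (ζ i - ξ i)) ≤ f ζ) → (∑ i, h i * ξ i) = b)
      ↔ (∃ c : ℝ, ∀ h : Fin d → ℝ,
        (∀ ζ ∈ s, f ξ + (∑ i, h i * (ζ i - ξ i)) ≤ f ζ) →
          sSup {y : ℝ | ∃ ζ ∈ s, y = (∑ i, h i * ζ i) - f ζ} = c))
    ∧ ((∃ c : ℝ, ∀ h : Fin d → ℝ,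
        (∀ ζ ∈ s, f ξ + (∑ i, h i * (ζ i - ξ i)) ≤ f ζ) →
          sSup {y : ℝ | ∃ ζ ∈ s, y = (∑ i, h i * ζ i) - f ζ} = c)
      ↔ (∃ b : ℝ, HasDerivWithinAt (fun t : ℝ => f (t • ξ)) b {t : ℝ | t • ξ ∈ s} 1)) := by
  classical
  have hξs : ξ ∈ s := intrinsicInterior_subset hξ
  have key : ∀ h : Fin d → ℝ, (∀ ζ ∈ s, f ξ + (∑ i, h i * (ζ i - ξ i)) ≤ f ζ) →
      sSup {y : ℝ | ∃ ζ ∈ s, y = (∑ i, h i * ζ i) - f ζ} = (∑ i, h i * ξ i) - f ξ := by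
    intro h hh
    refine IsGreatest.csSup_eq ⟨⟨ξ, hξs, rfl⟩, ?_⟩
    rintro y ⟨ζ, hζ, rfl⟩
    have h1 := hh ζ hζ
    have h2 : (∑ i, h i * (ζ i - ξ i)) = (∑ i, h i * ζ i) - ∑ i, h i * ξ i := by
      rw [← Finset.sum_sub_distrib]
      exact Finset.sum_congr rfl fun i _ => by ring
    rw [h2] at h1
    linarith
  refine ⟨⟨?_, ?_⟩, ?_, ?_⟩
  · rintro ⟨b, hb⟩
    exact ⟨b - f ξ, fun h hh => by rw [key h hh, hb h hh]⟩
  · rintro ⟨c, hc⟩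
    refine ⟨c + f ξ, fun h hh => ?_⟩
    have h1 := hc h hh
    rw [key h hh] at h1
    linarith
  · -- (b) → (c)
    rintro ⟨c, hc⟩
    by_cases hξz : ξ = 0
    · refine ⟨0, ?_⟩
      subst hξz
      have hconst : (fun t : ℝ => f (t • (0 : Fin d → ℝ))) = fun _ : ℝ => f 0 := by
        funext t; rw [smul_zero]
      rw [hconst]
      exact hasDerivWithinAt_const 1 _ (f 0)
    · set V := (affineSpan ℝ s).direction with hVdef
      have hsV : ∀ ζ ∈ s, ζ - ξ ∈ V := by
        intro ζ hζ
        have := AffineSubspace.vsub_mem_direction (subset_affineSpan ℝ s hζ)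
          (subset_affineSpan ℝ s hξs)
        simpa [vsub_eq_sub] using this
      obtain ⟨ε₀, hε₀, hball⟩ := Metric.mem_nhds_iff.1 hseg
      have hξV : ξ ∈ V := by
        have hmem : (1 + ε₀/2) • ξ ∈ s := by
          apply hball
          rw [Metric.mem_ball, Real.dist_eq,
            show (1 + ε₀/2) - 1 = ε₀/2 by ring, abs_of_pos (by linarith)]
          linarith
        have h1 : (1 + ε₀/2) • ξ - ξ ∈ V := hsV _ hmem
        have h2 : (1 + ε₀/2) • ξ - ξ = (ε₀/2) • ξ := by module
        rw [h2] at h1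
        have h3 := V.smul_mem (ε₀/2)⁻¹ h1
        rwa [smul_smul, inv_mul_cancel₀ (by positivity), one_smul] at h3
      have hri : ∀ v ∈ V, ∃ t : ℝ, 0 < t ∧ ξ + t • v ∈ s := by
        intro v hv
        obtain ⟨y, hy, hyx⟩ := hξ
        rw [mem_interior_iff_mem_nhds, mem_nhds_subtype] at hy
        obtain ⟨u, hu, hus⟩ := hy
        rw [hyx] at hu
        obtain ⟨δ, hδ, hbu⟩ := Metric.mem_nhds_iff.1 hu
        set c := δ / 2 / (‖v‖ + 1) with hcdef
        have hc : 0 < c := by positivity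
        refine ⟨c, hc, ?_⟩
        have hmemA : ξ + c • v ∈ affineSpan ℝ s := by
          have := AffineSubspace.vadd_mem_of_mem_direction (V.smul_mem c hv)
            (subset_affineSpan ℝ s hξs)
          simpa [vadd_eq_add, add_comm] using this
        have hdist : ξ + c • v ∈ Metric.ball ξ δ := by
          rw [Metric.mem_ball, dist_eq_norm, show ξ + c • v - ξ = c • v by module,
            norm_smul, Real.norm_eq_abs, abs_of_pos hc]
          have hnv : (0:ℝ) ≤ ‖v‖ := norm_nonneg v
          calc c * ‖v‖ ≤ c * (‖v‖ + 1) := by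
                exact mul_le_mul_of_nonneg_left (by linarith) hc.le
            _ = δ / 2 := by rw [hcdef]; field_simp
            _ < δ := by linarith
        have hmemu : (⟨ξ + c • v, hmemA⟩ : affineSpan ℝ s) ∈ Subtype.val ⁻¹' u :=
          hbu hdist
        exact hus hmemu
      have hbdd : ∀ v ∈ V, BddBelow (SS f s ξ v) := by
        intro v hv
        obtain ⟨t', ht', hm'⟩ := hri (-v) (V.neg_mem hv)
        refine ⟨-((f (ξ + t' • (-v)) - f ξ) / t'), ?_⟩
        rintro y ⟨t, ht, hm, rfl⟩
        exact slope_lb hconv hξs v ht ht' hm hm'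
      have hne : ∀ v ∈ V, (SS f s ξ v).Nonempty := by
        intro v hv
        obtain ⟨t, ht, hm⟩ := hri v hv
        exact ⟨_, t, ht, hm, rfl⟩
      have hsum0 : 0 ≤ pp f s ξ ξ + pp f s ξ (-ξ) := by
        have h1 := pp_add hconv hξs ξ (-ξ) (hne ξ hξV) (hne _ (V.neg_mem hξV))
          (hbdd _ (V.add_mem hξV (V.neg_mem hξV)))
        rw [add_neg_cancel, pp_zero hξs] at h1
        exact h1
      have hext : ∀ r : ℝ, (∀ cc : ℝ, cc * r ≤ pp f s ξ (cc • ξ)) →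
          ∃ hv : Fin d → ℝ, (∀ ζ ∈ s, f ξ + (∑ i, hv i * (ζ i - ξ i)) ≤ f ζ) ∧
            (∑ i, hv i * ξ i) = r := by
        intro r hr
        set ξ' : V := ⟨ξ, hξV⟩ with hξ'def
        have hξ'ne : ξ' ≠ 0 := by
          intro hcon
          apply hξz
          have := congrArg Subtype.val hcon
          exact this
        obtain ⟨g, hg1, hg2⟩ := exists_extension_of_le_sublinear
          (LinearPMap.mkSpanSingleton ξ' r hξ'ne)
          (fun x : V => pp f s ξ (x : Fin d → ℝ))
          (fun c hc x => by simpa using pp_hom c hc (x : Fin d → ℝ))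
          (fun x y => by
            simpa using pp_add hconv hξs (x : Fin d → ℝ) y (hne _ x.2) (hne _ y.2)
              (hbdd _ (V.add_mem x.2 y.2)))
          (by
            rintro ⟨x, hx⟩
            rcases Submodule.mem_span_singleton.1 hx with ⟨cc, rfl⟩
            erw [LinearPMap.mkSpanSingleton'_apply]
            simpa [smul_eq_mul] using hr cc)
        obtain ⟨g', hg'⟩ := LinearMap.exists_extend g
        have hdot : ∀ ζ : Fin d → ℝ,
            (∑ i, g' (fun j => if i = j then 1 else 0) * ζ i) = g' ζ := by
          intro ζ
          rw [LinearMap.pi_apply_eq_sum_univ g' ζ]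
          exact Finset.sum_congr rfl fun i _ => by rw [smul_eq_mul]; ring
        have happ : ∀ x : V, g' (x : Fin d → ℝ) = g x := by
          intro x
          conv_rhs => rw [← hg']
          rfl
        refine ⟨fun i => g' (fun j => if i = j then 1 else 0), ?_, ?_⟩
        · intro ζ hζ
          have hmemV : ζ - ξ ∈ V := hsV ζ hζ
          have h1 : (∑ i, g' (fun j => if i = j then 1 else 0) * (ζ i - ξ i)) = g' (ζ - ξ) := by
            have h0 := hdot (ζ - ξ)
            simp only [Pi.sub_apply] at h0
            exact h0
          have h2 : g' (ζ - ξ) = g ⟨ζ - ξ, hmemV⟩ := happ ⟨ζ - ξ, hmemV⟩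
          have h3 : g ⟨ζ - ξ, hmemV⟩ ≤ pp f s ξ (ζ - ξ) := hg2 ⟨ζ - ξ, hmemV⟩
          have h4 : pp f s ξ (ζ - ξ) ≤ f ζ - f ξ :=
            csInf_le (hbdd _ hmemV)
              ⟨1, one_pos, by simpa using hζ, by simp⟩
          rw [h1, h2]
          linarith
        · have h1 : (∑ i, g' (fun j => if i = j then 1 else 0) * ξ i) = g' ξ := hdot ξ
          have h2 : g' ξ = g ξ' := happ ξ'
          have h3 : g ξ' = r := by
            have h4 := hg1 ⟨ξ', Submodule.mem_span_singleton_self ξ'⟩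
            rw [h4]
            exact LinearPMap.mkSpanSingleton_apply ℝ ℝ hξ'ne r
          rw [h1, h2, h3]
      obtain ⟨hp, hsubp, hvalp⟩ := hext (pp f s ξ ξ) (by
        intro cc
        rcases lt_trichotomy cc 0 with hcc | rfl | hcc
        · rw [show cc • ξ = (-cc) • (-ξ) by module, pp_hom (-cc) (by linarith) (-ξ)]
          nlinarith [hsum0]
        · rw [zero_smul, pp_zero hξs, zero_mul]
        · rw [pp_hom cc hcc ξ])
      obtain ⟨hm, hsubm, hvalm⟩ := hext (-(pp f s ξ (-ξ))) (by
        intro cc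
        rcases lt_trichotomy cc 0 with hcc | rfl | hcc
        · rw [show cc • ξ = (-cc) • (-ξ) by module, pp_hom (-cc) (by linarith) (-ξ),
            show cc * -(pp f s ξ (-ξ)) = (-cc) * pp f s ξ (-ξ) by ring]
        · rw [zero_smul, pp_zero hξs, zero_mul]
        · rw [pp_hom cc hcc ξ]
          nlinarith [hsum0])
      have e1 : (∑ i, hp i * ξ i) - f ξ = c := by rw [← key hp hsubp]; exact hc hp hsubp
      have e2 : (∑ i, hm i * ξ i) - f ξ = c := by rw [← key hm hsubm]; exact hc hm hsubm
      have heq : pp f s ξ ξ = -(pp f s ξ (-ξ)) := by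
        rw [← hvalp, ← hvalm]
        linarith
      refine ⟨pp f s ξ ξ, ?_⟩
      rw [hasDerivWithinAt_iff_tendsto_slope, Metric.tendsto_nhds]
      intro ε hε
      obtain ⟨y₁, hy₁m, hyp⟩ := exists_lt_of_csInf_lt (hne ξ hξV)
        (lt_add_of_pos_right (pp f s ξ ξ) hε)
      obtain ⟨τp, hτp, hmp, rfl⟩ := hy₁m
      obtain ⟨y₂, hy₂m, hym⟩ := exists_lt_of_csInf_lt (hne (-ξ) (V.neg_mem hξV))
        (lt_add_of_pos_right (pp f s ξ (-ξ)) hε)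
      obtain ⟨τm, hτm, hmm, rfl⟩ := hy₂m
      have hδ : 0 < min τp τm := lt_min hτp hτm
      have hev : ∀ᶠ t in nhdsWithin 1 ({t : ℝ | t • ξ ∈ s} \ {1}), |t - 1| < min τp τm :=
        (eventually_abs_sub_lt 1 hδ).filter_mono nhdsWithin_le_nhds
      filter_upwards [hev, self_mem_nhdsWithin] with t htδ htT
      obtain ⟨htm, htne⟩ := htT
      have htne' : t ≠ 1 := by simpa using htne
      rw [Real.dist_eq, slope_def_field]
      have hone : f ((1:ℝ) • ξ) = f ξ := by rw [one_smul]
      rcases htne'.lt_or_gt with hlt | hgt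
      · have hτ : 0 < 1 - t := by linarith
        have h0 : 1 - t < min τp τm := by
          rwa [abs_of_neg (by linarith : t - 1 < 0), neg_sub] at htδ
        have hτle : 1 - t ≤ τm := (lt_of_lt_of_le h0 (min_le_right _ _)).le
        have hA : ξ + (1 - t) • (-ξ) = t • ξ := by module
        have hmem2 : ξ + (1 - t) • (-ξ) ∈ s := by rw [hA]; exact htm
        have hlow : pp f s ξ (-ξ) ≤ (f (ξ + (1 - t) • (-ξ)) - f ξ) / (1 - t) :=
          csInf_le (hbdd _ (V.neg_mem hξV)) ⟨1 - t, hτ, hmem2, rfl⟩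
        have hup : (f (ξ + (1 - t) • (-ξ)) - f ξ) / (1 - t)
            ≤ (f (ξ + τm • (-ξ)) - f ξ) / τm :=
          slope_mono hconv hξs (-ξ) hτ hτle hmm
        have hexpr : (f (t • ξ) - f ((1:ℝ) • ξ)) / (t - 1)
            = -((f (ξ + (1 - t) • (-ξ)) - f ξ) / (1 - t)) := by
          rw [hA, hone, show t - 1 = -(1 - t) by ring, div_neg]
        rw [hexpr, abs_lt]
        constructor <;> linarith
      · have hτ : 0 < t - 1 := by linarith
        have h0 : t - 1 < min τp τm := by rwa [abs_of_pos hτ] at htδ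
        have hτle : t - 1 ≤ τp := (lt_of_lt_of_le h0 (min_le_left _ _)).le
        have hA : ξ + (t - 1) • ξ = t • ξ := by module
        have hmem2 : ξ + (t - 1) • ξ ∈ s := by rw [hA]; exact htm
        have hlow : pp f s ξ ξ ≤ (f (ξ + (t - 1) • ξ) - f ξ) / (t - 1) :=
          csInf_le (hbdd _ hξV) ⟨t - 1, hτ, hmem2, rfl⟩
        have hup : (f (ξ + (t - 1) • ξ) - f ξ) / (t - 1)
            ≤ (f (ξ + τp • ξ) - f ξ) / τp :=
          slope_mono hconv hξs ξ hτ hτle hmp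
        have hexpr : (f (t • ξ) - f ((1:ℝ) • ξ)) / (t - 1)
            = (f (ξ + (t - 1) • ξ) - f ξ) / (t - 1) := by rw [hA, hone]
        rw [hexpr, abs_lt]
        constructor <;> linarith
  · -- (c) → (b)
    rintro ⟨b, hb⟩
    refine ⟨b - f ξ, fun h hh => ?_⟩
    rw [key h hh]
    have hd : HasDerivAt (fun t : ℝ => f (t • ξ)) b 1 := hb.hasDerivAt hseg
    have h1K : HasDerivAt (fun t : ℝ => (t - 1) * (∑ i, h i * ξ i)) (∑ i, h i * ξ i) 1 := by
      simpa using ((hasDerivAt_id' (1:ℝ)).sub_const 1).mul_const (∑ i, h i * ξ i)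
    have hψd : HasDerivAt (fun t : ℝ => f (t • ξ) - f ξ - (t - 1) * (∑ i, h i * ξ i))
        (b - ∑ i, h i * ξ i) 1 := (hd.sub_const (f ξ)).sub h1K
    have hmin : IsLocalMin (fun t : ℝ => f (t • ξ) - f ξ - (t - 1) * (∑ i, h i * ξ i)) 1 := by
      have hev : ∀ᶠ t in nhds (1:ℝ),
          (fun t : ℝ => f (t • ξ) - f ξ - (t - 1) * (∑ i, h i * ξ i)) 1
            ≤ (fun t : ℝ => f (t • ξ) - f ξ - (t - 1) * (∑ i, h i * ξ i)) t := by
        filter_upwards [hseg] with t ht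
        have h1 := hh (t • ξ) ht
        have h2 : (∑ i, h i * ((t • ξ) i - ξ i)) = (t - 1) * (∑ i, h i * ξ i) := by
          rw [Finset.mul_sum]
          exact Finset.sum_congr rfl fun i _ => by
            simp only [Pi.smul_apply, smul_eq_mul]; ring
        rw [h2] at h1
        simp only [one_smul, sub_self, zero_mul, sub_zero]
        linarith
      exact hev
    have hzero := hmin.hasDerivAt_eq_zero hψd
    have : (∑ i, h i * ξ i) = b := by linarith
    rw [this]
end

section
/- Let x ∈ ℤ^d with |x|₁ = n and let π be a nearest-neighbor lattice path from 0 to x. Define level j of N-cubes as the collection {S(k) : |k|₁ = j} where S(k) = Nk + [0,N)^d ∩ ℤ^d. Then the path π enters and exits at least one N-cube at each level 0, 1, …, m₀, where m₀ ≥ n/N − (d+1). -/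
/-- Uniqueness of the cube containing `y`. -/
lemma ediv_uniq {N k y : ℤ} (hN : 0 < N) (h1 : k * N ≤ y) (h2 : y < k * N + N) :
    y / N = k := by
  have hdm := Int.mul_ediv_add_emod y N
  have hr0 : 0 ≤ y % N := Int.emod_nonneg y (by omega)
  have hrN : y % N < N := Int.emod_lt_of_pos y hN
  set q := y / N with hq
  have hq1 : q < k + 1 := by
    have : N * q < N * (k + 1) := by nlinarith
    exact lt_of_mul_lt_mul_left this (by omega)
  have hq2 : k < q + 1 := by
    have : N * k < N * (q + 1) := by nlinarith
    exact lt_of_mul_lt_mul_left this (by omega)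
  omega

/-- Floor division is 1-Lipschitz for positive divisors. -/
lemma ediv_lip_mono {N a b : ℤ} (hN : 0 < N) (hab : b ≤ a) :
    a / N ≤ b / N + (a - b) := by
  have h1 : a ≤ b + (a - b) * N := by nlinarith
  have h2 : a / N ≤ (b + (a - b) * N) / N := Int.ediv_le_ediv hN h1
  rwa [Int.add_mul_ediv_right _ _ (by omega : N ≠ 0)] at h2

lemma ediv_lip {N : ℤ} (hN : 0 < N) (a b : ℤ) : |a / N - b / N| ≤ |a - b| := by
  rcases le_total b a with h | h
  · have h1 := ediv_lip_mono hN h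
    have h2 := Int.ediv_le_ediv hN h
    rw [abs_of_nonneg (by omega : (0:ℤ) ≤ a - b), abs_of_nonneg (by omega)]
    omega
  · have h1 := ediv_lip_mono hN h
    have h2 := Int.ediv_le_ediv hN h
    rw [abs_of_nonpos (by omega : a - b ≤ 0), abs_of_nonpos (by omega)]
    omega

/-- Discrete intermediate value theorem. -/
lemma discrete_ivt (M : ℕ) (f : ℕ → ℤ) (hs : ∀ i < M, |f (i + 1) - f i| ≤ 1)
    (j : ℤ) (h0 : f 0 ≤ j) (hM : j ≤ f M) : ∃ s ≤ M, f s = j := by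
  induction M with
  | zero => exact ⟨0, le_refl _, by omega⟩
  | succ M ih =>
    by_cases h : j ≤ f M
    · obtain ⟨s, hsM, hfs⟩ := ih (fun i hi => hs i (by omega)) h
      exact ⟨s, by omega, hfs⟩
    · have h1 := hs M (by omega)
      rw [abs_le] at h1
      exact ⟨M + 1, le_refl _, by omega⟩

/-- A nearest-neighbor lattice path from `0` to `x` with `|x|₁ = n` enters and exits at
least one `N`-cube `S(k) = Nk + [0,N)^d` at each level `j ∈ {0,…,m₀}`, where the levels
are `{S(k) : |k|₁ = j}` and `m₀ ≥ n/N − (d+1)`. -/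
theorem stmt16 (d N : ℕ) (hN : 0 < N) (x : Fin d → ℤ) (n : ℕ)
    (hx : (∑ i, |x i|) = (n : ℤ)) (M : ℕ) (π : ℕ → (Fin d → ℤ))
    (h0 : π 0 = 0) (hM : π M = x)
    (hstep : ∀ i < M, (∑ j, |π (i + 1) j - π i j|) = 1) :
    ∃ m₀ : ℤ, (n : ℝ) / (N : ℝ) - ((d : ℝ) + 1) ≤ (m₀ : ℝ) ∧
      ∀ j : ℕ, (j : ℤ) ≤ m₀ →
        ∃ k : Fin d → ℤ, (∑ i, |k i|) = (j : ℤ) ∧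
          ∃ s t : ℕ, s < t ∧ t ≤ M ∧
            (∀ i, k i * (N : ℤ) ≤ π s i ∧ π s i < k i * (N : ℤ) + (N : ℤ)) ∧
            ¬ (∀ i, k i * (N : ℤ) ≤ π t i ∧ π t i < k i * (N : ℤ) + (N : ℤ)) := by
  have hNZ : (0 : ℤ) < (N : ℤ) := by exact_mod_cast hN
  -- cube index and level
  set K : (Fin d → ℤ) → (Fin d → ℤ) := fun y i => y i / (N : ℤ) with hK
  set f : ℕ → ℤ := fun i => ∑ j, |K (π i) j| with hf
  -- membership in own cube
  have hmem : ∀ (y : Fin d → ℤ) (i : Fin d),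
      K y i * (N : ℤ) ≤ y i ∧ y i < K y i * (N : ℤ) + (N : ℤ) := by
    intro y i
    have hdm := Int.mul_ediv_add_emod (y i) (N : ℤ)
    have hr0 : 0 ≤ y i % (N : ℤ) := Int.emod_nonneg _ (by omega)
    have hrN : y i % (N : ℤ) < (N : ℤ) := Int.emod_lt_of_pos _ hNZ
    constructor <;> [nlinarith; nlinarith]
  -- steps change the level by at most 1
  have hfs : ∀ i < M, |f (i + 1) - f i| ≤ 1 := by
    intro i hi
    have h1 : f (i + 1) - f i = ∑ j, (|K (π (i+1)) j| - |K (π i) j|) := by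
      simp [hf, Finset.sum_sub_distrib]
    calc |f (i + 1) - f i| = |∑ j, (|K (π (i+1)) j| - |K (π i) j|)| := by rw [h1]
      _ ≤ ∑ j, abs (|K (π (i+1)) j| - |K (π i) j|) := Finset.abs_sum_le_sum_abs _ _
      _ ≤ ∑ j, |K (π (i+1)) j - K (π i) j| :=
          Finset.sum_le_sum (fun j _ => abs_abs_sub_abs_le_abs_sub _ _)
      _ ≤ ∑ j, |π (i+1) j - π i j| :=
          Finset.sum_le_sum (fun j _ => by
            have := ediv_lip hNZ (π (i+1) j) (π i j)
            simpa [hK] using this)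
      _ ≤ 1 := le_of_eq (hstep i hi)
  have hf0 : f 0 = 0 := by simp [hf, hK, h0]
  set L : ℤ := f M with hL
  -- bound: n ≤ N * L + d * (N - 1)
  have hbound : (n : ℤ) ≤ (N : ℤ) * L + d * ((N : ℤ) - 1) := by
    have hco : ∀ i : Fin d, |x i| ≤ (N : ℤ) * |K x i| + ((N : ℤ) - 1) := by
      intro i
      obtain ⟨hl, hr⟩ := hmem x i
      rcases abs_cases (K x i) with ⟨he, _⟩ | ⟨he, _⟩ <;>
        rcases abs_cases (x i) with ⟨he2, _⟩ | ⟨he2, _⟩ <;> nlinarith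
    calc (n : ℤ) = ∑ i, |x i| := hx.symm
      _ ≤ ∑ i : Fin d, ((N : ℤ) * |K x i| + ((N : ℤ) - 1)) :=
          Finset.sum_le_sum (fun i _ => hco i)
      _ = (N : ℤ) * L + d * ((N : ℤ) - 1) := by
          rw [Finset.sum_add_distrib, ← Finset.mul_sum]
          simp [hL, hf, hM, mul_comm]
          ring
  refine ⟨L - 1, ?_, ?_⟩
  · -- real inequality
    have h1 : (n : ℤ) ≤ (N : ℤ) * (L + d) := by nlinarith
    have h2 : (n : ℝ) ≤ (N : ℝ) * ((L : ℝ) + d) := by exact_mod_cast h1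
    have hNR : (0:ℝ) < (N:ℝ) := by exact_mod_cast hN
    have h3 : (n:ℝ)/(N:ℝ) ≤ (L:ℝ) + d := by
      rw [div_le_iff₀ hNR]; nlinarith
    push_cast
    linarith
  · intro j hj
    have hjL : (j : ℤ) < L := by omega
    obtain ⟨s, hsM, hfs'⟩ := discrete_ivt M f hfs (j : ℤ) (by omega) (by omega)
    have hsltM : s < M := by
      rcases lt_or_eq_of_le hsM with h | h
      · exact h
      · exfalso; rw [h] at hfs'; omega
    refine ⟨K (π s), hfs', s, M, hsltM, le_refl _, fun i => hmem (π s) i, ?_⟩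
    intro hcon
    have : ∀ i : Fin d, K x i = K (π s) i := by
      intro i
      have := hcon i
      rw [hM] at this
      exact ediv_uniq hNZ this.1 this.2
    have : L = (j : ℤ) := by
      rw [hL, ← hfs']
      simp only [hf, hM]
      exact Finset.sum_congr rfl (fun i _ => by rw [this i])
    omega
end
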